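/- arXiv:1904.00322 — 4 statements merged into one kernel-verified Lean document; each statement's English description precedes it below -/
import Mathlib

section
/- Let {U_n : n < ω} be a countable family of ultrafilters on a set S and F = ⋂_n U_n. If there exists a countable partition A of S such that no member of A belongs to any U_n, then for every F-positive set X, the filter F ↾ X generated by F and X is not countably complete (i.e., there is a countable subfamily of F ↾ X whose intersection is not in F ↾ X). -/
/-- If there is a countable partition of `S` no member of which belongs to any `U n`,
then for every `F`-positive `X` (where `F = ⋂ n, U n`), the filter `F ↾ X` is not
countably complete. -/
theorem stmt7 {S : Type*} (U : ℕ → Ultrafilter S) (𝒜 : Set (Set S))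
    (hc : 𝒜.Countable) (hdisj : 𝒜.PairwiseDisjoint id) (hcov : ⋃₀ 𝒜 = Set.univ)
    (hA : ∀ A ∈ 𝒜, ∀ n, A ∉ U n) :
    ∀ X : Set S, (¬ ∀ n, Xᶜ ∈ U n) →
      ∃ C : ℕ → Set S, (∀ m, ∀ n, C m ∪ Xᶜ ∈ U n) ∧ ¬ ∀ n, (⋂ m, C m) ∪ Xᶜ ∈ U n := by
  intro X hX
  push_neg at hX
  obtain ⟨n₀, hn₀⟩ := hX
  have hSne : Nonempty S := Filter.nonempty_of_neBot (U 0 : Filter S)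
  obtain ⟨s⟩ := hSne
  have hne : 𝒜.Nonempty := by
    have : s ∈ ⋃₀ 𝒜 := by rw [hcov]; trivial
    obtain ⟨A, hA', _⟩ := this
    exact ⟨A, hA'⟩
  obtain ⟨A, hAr⟩ := hc.exists_eq_range hne
  refine ⟨fun m => (A m)ᶜ, ?_, ?_⟩
  · intro m n
    have hm : A m ∈ 𝒜 := hAr ▸ Set.mem_range_self m
    exact Filter.mem_of_superset (Ultrafilter.compl_mem_iff_notMem.2 (hA _ hm n))
      Set.subset_union_left
  · intro h
    have hempty : (⋂ m, (A m)ᶜ) = ∅ := by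
      rw [← Set.compl_iUnion, Set.compl_empty_iff, ← Set.sUnion_range, ← hAr, hcov]
    have := h n₀
    rw [hempty, Set.empty_union] at this
    exact hn₀ this
end

section
/- Let {U_n : n < ω} be a countable family of ultrafilters on an uncountable set S, and let F = ⋂_n U_n. If for every F-positive set X the filter F ↾ X is not countably complete, then there is a countable partition A of S such that A ∉ U_n for every A ∈ A and n < ω. -/
open Set

namespace Stmt8Aux

variable {S : Type*} (U : ℕ → Ultrafilter S)

/-- `X` is null: its complement is in every `U n`. -/
def Null (X : Set S) : Prop := ∀ n, Xᶜ ∈ U n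

/-- `X` is covered by countably many null sets. -/
def Idl (X : Set S) : Prop := ∃ E : ℕ → Set S, (∀ k, Null U (E k)) ∧ X ⊆ ⋃ k, E k

lemma null_mono {X Y : Set S} (hXY : X ⊆ Y) (hY : Null U Y) : Null U X :=
  fun n => Filter.mem_of_superset (hY n) (compl_subset_compl.2 hXY)

lemma null_idl {X : Set S} (hX : Null U X) : Idl U X :=
  ⟨fun _ => X, fun _ => hX, subset_iUnion (fun _ : ℕ => X) 0⟩

lemma idl_mono {X Y : Set S} (hXY : X ⊆ Y) (hY : Idl U Y) : Idl U X := by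
  obtain ⟨E, hE, hsub⟩ := hY; exact ⟨E, hE, hXY.trans hsub⟩

lemma idl_iUnion {X : ℕ → Set S} (hX : ∀ k, Idl U (X k)) : Idl U (⋃ k, X k) := by
  choose E hE hsub using hX
  refine ⟨fun n => E n.unpair.1 n.unpair.2, fun n => hE _ _, ?_⟩
  rintro x hx
  simp only [mem_iUnion] at hx ⊢
  obtain ⟨k, hk⟩ := hx
  obtain ⟨j, hj⟩ := mem_iUnion.1 (hsub k hk)
  exact ⟨Nat.pair k j, by simpa [Nat.unpair_pair] using hj⟩

lemma idl_union {X Y : Set S} (hX : Idl U X) (hY : Idl U Y) : Idl U (X ∪ Y) := by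
  have hfam : ∀ k : ℕ, Idl U (if k = 0 then X else Y) := by
    intro k; split <;> assumption
  refine idl_mono U ?_ (idl_iUnion U hfam)
  rintro x (hx | hx)
  · exact mem_iUnion.2 ⟨0, by simpa using hx⟩
  · exact mem_iUnion.2 ⟨1, by simpa using hx⟩

lemma idl_univ
    (h : ∀ X : Set S, (¬ ∀ n, Xᶜ ∈ U n) →
      ∃ C : ℕ → Set S, (∀ m, ∀ n, C m ∪ Xᶜ ∈ U n) ∧ ¬ ∀ n, (⋂ m, C m) ∪ Xᶜ ∈ U n) :
    Idl U Set.univ := by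
  classical
  by_contra hI
  -- every set whose complement is in the ideal is positive
  have hGpos : ∀ X : Set S, Idl U Xᶜ → ¬ Null U X := by
    intro X hX hN
    refine hI (idl_mono U ?_ (idl_union U (null_idl U hN) hX))
    simp
  -- choose witnesses
  have hchoice : ∀ m : ℕ, ∃ X : Set S, Idl U Xᶜ ∧
      ((∀ Y : Set S, Idl U Yᶜ → Y ∈ U m) ∨ X ∉ U m) := by
    intro m
    by_cases hm : ∀ Y : Set S, Idl U Yᶜ → Y ∈ U m
    · refine ⟨Set.univ, ?_, Or.inl hm⟩
      rw [compl_univ]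
      refine null_idl U (fun n => ?_)
      rw [compl_empty]
      exact Filter.univ_mem
    · push_neg at hm
      obtain ⟨Y, hY1, hY2⟩ := hm
      exact ⟨Y, hY1, Or.inr hY2⟩
  choose R hRG hRalt using hchoice
  set Rs : Set S := ⋂ m, R m with hRsdef
  have hRsG : Idl U Rsᶜ := by
    rw [hRsdef, compl_iInter]
    exact idl_iUnion U hRG
  have hRspos : ¬ Null U Rs := hGpos _ hRsG
  obtain ⟨C, hC1, hC2⟩ := h Rs hRspos
  push_neg at hC2
  obtain ⟨n₀, hn₀⟩ := hC2
  -- the witness n₀ satisfies: everything with complement in the ideal is in U n₀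
  have hn₀M : ∀ Y : Set S, Idl U Yᶜ → Y ∈ U n₀ := by
    rcases hRalt n₀ with hM | hnot
    · exact hM
    · exfalso
      have h1 : Rs ∉ U n₀ := fun hmem =>
        hnot (Filter.mem_of_superset hmem (iInter_subset R n₀))
      have h2 : Rsᶜ ∈ U n₀ := Ultrafilter.compl_mem_iff_notMem.2 h1
      exact hn₀ (Filter.mem_of_superset h2 subset_union_right)
  -- the residue
  set Rr : Set S := Rs ∩ ⋂ m, C m with hRrdef
  have hRrG : Idl U Rrᶜ := by
    have hsub : Rrᶜ ⊆ Rsᶜ ∪ ⋃ m, (C m ∪ Rsᶜ)ᶜ := by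
      intro x hx
      by_cases hxs : x ∈ Rs
      · have hxC : x ∉ ⋂ m, C m := by
          intro hC
          exact hx ⟨hxs, hC⟩
        obtain ⟨m, hm⟩ := by
          simpa [mem_iInter] using hxC
        refine Or.inr (mem_iUnion.2 ⟨m, ?_⟩)
        simp only [mem_compl_iff, mem_union, not_or]
        exact ⟨hm, fun hxc => hxc hxs⟩
      · exact Or.inl hxs
    refine idl_mono U hsub (idl_union U hRsG (idl_iUnion U fun m => ?_))
    refine null_idl U (fun n => ?_)
    rw [compl_compl]
    exact hC1 m n
  have hRrU : Rr ∈ U n₀ := hn₀M _ hRrG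
  have : (⋂ m, C m) ∪ Rsᶜ ∈ U n₀ := by
    refine Filter.mem_of_superset hRrU ?_
    intro x hx
    exact Or.inl hx.2
  exact hn₀ this

end Stmt8Aux

/-- If `S` is uncountable and for every `F`-positive `X` (where `F = ⋂ n, U n`) the filter
`F ↾ X` is not countably complete, then there is a countable partition of `S` none of
whose members belongs to any `U n`. -/
theorem stmt8 {S : Type*} [Uncountable S] (U : ℕ → Ultrafilter S)
    (h : ∀ X : Set S, (¬ ∀ n, Xᶜ ∈ U n) →
      ∃ C : ℕ → Set S, (∀ m, ∀ n, C m ∪ Xᶜ ∈ U n) ∧ ¬ ∀ n, (⋂ m, C m) ∪ Xᶜ ∈ U n) :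
    ∃ 𝒜 : Set (Set S), 𝒜.Countable ∧ 𝒜.PairwiseDisjoint id ∧ ⋃₀ 𝒜 = Set.univ ∧
      (∀ A ∈ 𝒜, A.Nonempty) ∧ ∀ A ∈ 𝒜, ∀ n, A ∉ U n := by
  classical
  obtain ⟨E, hE, hcov⟩ := Stmt8Aux.idl_univ U h
  set A : ℕ → Set S := fun k => E k \ ⋃ j < k, E j with hA
  refine ⟨{B | ∃ k, B = A k ∧ B.Nonempty}, ?_, ?_, ?_, ?_, ?_⟩
  · refine Set.Countable.mono ?_ (Set.countable_range A)
    rintro B ⟨k, hk, -⟩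
    exact ⟨k, hk.symm⟩
  · rintro B ⟨k, hk, -⟩ B' ⟨k', hk', -⟩ hne
    have hkk' : k ≠ k' := by
      rintro rfl; exact hne (hk.trans hk'.symm)
    simp only [Function.onFun, id_eq]
    rw [Set.disjoint_left]
    intro x hxB hxB'
    rw [hk] at hxB
    rw [hk'] at hxB'
    rcases lt_or_gt_of_ne hkk' with hlt | hlt
    · exact hxB'.2 (Set.mem_biUnion hlt hxB.1)
    · exact hxB.2 (Set.mem_biUnion hlt hxB'.1)
  · apply Set.eq_univ_of_forall
    intro x
    have hx : ∃ k, x ∈ E k := by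
      simpa using hcov (Set.mem_univ x)
    let k₀ := Nat.find hx
    refine ⟨A k₀, ⟨k₀, rfl, ⟨x, ?_⟩⟩, ?_⟩
    · refine ⟨Nat.find_spec hx, ?_⟩
      intro hxj
      obtain ⟨j, hj, hxj⟩ := by simpa using hxj
      exact Nat.find_min hx hj hxj
    · refine ⟨Nat.find_spec hx, ?_⟩
      intro hxj
      obtain ⟨j, hj, hxj⟩ := by simpa using hxj
      exact Nat.find_min hx hj hxj
  · rintro B ⟨k, -, hne⟩
    exact hne
  · rintro B ⟨k, hk, -⟩ n
    have hnull : Bᶜ ∈ U n := by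
      refine Filter.mem_of_superset (hE k n) (compl_subset_compl.2 ?_)
      rw [hk]
      exact Set.diff_subset
    exact Ultrafilter.compl_mem_iff_notMem.1 hnull
end

section
/- Let F be a countably complete filter on S such that every uncountable family of F-positive sets contains two members whose intersection is F-positive (ω₁-saturation). Suppose moreover F is (2^ℵ₀)⁺-complete. Then there exists an F-positive set Y such that F ↾ Y is an ultrafilter. (Tarski's theorem.) -/
open Set Filter Cardinal Order
open scoped Classical

namespace TarskiAux

variable {S : Type}

noncomputable def step (split : Set S → Set S) (Y : Set S) (x : S) : Set S :=
  Y ∩ (if x ∈ split Y then split Y else (split Y)ᶜ)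

noncomputable def sib (split : Set S → Set S) (Y : Set S) (x : S) : Set S :=
  Y ∩ (if x ∈ split Y then (split Y)ᶜ else split Y)

lemma step_subset (split : Set S → Set S) (Y : Set S) (x : S) : step split Y x ⊆ Y :=
  inter_subset_left

lemma sib_subset (split : Set S → Set S) (Y : Set S) (x : S) : sib split Y x ⊆ Y :=
  inter_subset_left

lemma mem_step {split : Set S → Set S} {Y : Set S} {x : S} (hx : x ∈ Y) :
    x ∈ step split Y x := by
  by_cases h : x ∈ split Y <;> simp [step, h, hx]

lemma step_inter_sib (split : Set S → Set S) (Y : Set S) (x : S) :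
    step split Y x ∩ sib split Y x = ∅ := by
  unfold step sib
  by_cases h : x ∈ split Y
  · rw [if_pos h, if_pos h]
    ext z; simp only [mem_inter_iff, mem_compl_iff, mem_empty_iff_false, iff_false]; tauto
  · rw [if_neg h, if_neg h]
    ext z; simp only [mem_inter_iff, mem_compl_iff, mem_empty_iff_false, iff_false]; tauto

noncomputable def node (split : Set S → Set S) : Ordinal.{0} → S → Set S :=
  Ordinal.lt_wf.fix (C := fun _ => S → Set S) fun α ih x =>
    ⋂ β : {β : Ordinal // β < α}, step split (ih β.1 β.2 x) x

lemma node_def (split : Set S → Set S) (α : Ordinal.{0}) (x : S) :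
    node split α x = ⋂ β : {β : Ordinal // β < α}, step split (node split β.1 x) x := by
  conv_lhs => rw [node, Ordinal.lt_wf.fix_eq]
  rfl

lemma node_subset_step (split : Set S → Set S) {β α : Ordinal.{0}} (h : β < α) (x : S) :
    node split α x ⊆ step split (node split β x) x := by
  rw [node_def split α x]
  exact iInter_subset (fun γ : {γ : Ordinal // γ < α} => step split (node split γ.1 x) x) ⟨β, h⟩

lemma node_anti (split : Set S → Set S) {β α : Ordinal.{0}} (h : β ≤ α) (x : S) :
    node split α x ⊆ node split β x := by
  rcases h.lt_or_eq with h | h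
  · exact (node_subset_step split h x).trans (step_subset _ _ _)
  · rw [h]

lemma node_zero (split : Set S → Set S) (x : S) : node split 0 x = Set.univ := by
  haveI : IsEmpty {β : Ordinal.{0} // β < 0} := ⟨fun b => ((zero_le (a := b.1)).not_gt b.2)⟩
  rw [node_def]
  exact iInter_of_empty _

lemma node_succ (split : Set S → Set S) (α : Ordinal.{0}) (x : S) :
    node split (α + 1) x = step split (node split α x) x := by
  have hlt : α < α + 1 := by
    rw [Ordinal.add_one_eq_succ]; exact lt_succ α
  apply subset_antisymm
  · exact node_subset_step split hlt x
  · rw [node_def split (α + 1) x]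
    refine subset_iInter fun β => ?_
    have hβ : β.1 ≤ α := lt_succ_iff.mp (by rw [← Ordinal.add_one_eq_succ]; exact β.2)
    rcases hβ.lt_or_eq with h | h
    · exact (step_subset _ _ _).trans (node_subset_step split h x)
    · rw [h]

lemma node_limit (split : Set S → Set S) {α : Ordinal.{0}} (hα : Order.IsSuccLimit α) (x : S) :
    node split α x = ⋂ β : {β : Ordinal // β < α}, node split β.1 x := by
  apply subset_antisymm
  · exact subset_iInter fun β => node_anti split β.2.le x
  · rw [node_def split α x]
    refine subset_iInter fun β => ?_
    have hs : β.1 + 1 < α := by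
      rw [Ordinal.add_one_eq_succ]; exact hα.succ_lt β.2
    refine (iInter_subset (fun γ : {γ : Ordinal // γ < α} => node split γ.1 x) ⟨β.1 + 1, hs⟩).trans ?_
    rw [node_succ]

end TarskiAux

open TarskiAux

/-- Tarski's theorem: a proper, countably complete, `ω₁`-saturated and `(2^ℵ₀)⁺`-complete
filter `F` on an uncountable set `S` has an `F`-positive set `Y` such that `F ↾ Y` is an
ultrafilter. -/
theorem stmt11 {S : Type} [Uncountable S] (F : Filter S) [F.NeBot]
    (hcc : ∀ C : ℕ → Set S, (∀ n, C n ∈ F) → (⋂ n, C n) ∈ F)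
    (hsat : ∀ 𝒜 : Set (Set S), ¬ 𝒜.Countable → (∀ X ∈ 𝒜, Xᶜ ∉ F) →
      ∃ X ∈ 𝒜, ∃ Y ∈ 𝒜, X ≠ Y ∧ (X ∩ Y)ᶜ ∉ F)
    (hcomp : ∀ (ι : Type) (C : ι → Set S), Cardinal.mk ι ≤ 2 ^ Cardinal.aleph0 →
      (∀ i, C i ∈ F) → (⋂ i, C i) ∈ F) :
    ∃ Y : Set S, Yᶜ ∉ F ∧ ∀ Z : Set S, Z ∪ Yᶜ ∈ F ∨ Zᶜ ∪ Yᶜ ∈ F := by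
  classical
  by_contra hcon
  push_neg at hcon
  -- Choose, for every positive set, a split into two positive pieces.
  have hex : ∀ Y : Set S, ∃ Z : Set S, Yᶜ ∉ F → ((Y ∩ Z)ᶜ ∉ F ∧ (Y \ Z)ᶜ ∉ F) := by
    intro Y
    by_cases hY : Yᶜ ∉ F
    · obtain ⟨Z, hZ1, hZ2⟩ := hcon Y hY
      refine ⟨Z, fun _ => ⟨?_, ?_⟩⟩
      · have h : (Y ∩ Z)ᶜ = Zᶜ ∪ Yᶜ := by rw [Set.compl_inter]; exact Set.union_comm _ _
        rw [h]; exact hZ2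
      · have h : (Y \ Z)ᶜ = Z ∪ Yᶜ := by
          rw [Set.diff_eq, Set.compl_inter, compl_compl]; exact Set.union_comm _ _
        rw [h]; exact hZ1
    · exact ⟨∅, fun h => absurd h hY⟩
  choose split hsplit using hex
  have hstep_pos : ∀ (Y : Set S) (x : S), Yᶜ ∉ F → (step split Y x)ᶜ ∉ F := by
    intro Y x hY
    unfold TarskiAux.step
    by_cases h : x ∈ split Y
    · rw [if_pos h]; exact (hsplit Y hY).1
    · rw [if_neg h, ← Set.diff_eq]; exact (hsplit Y hY).2
  have hsib_pos : ∀ (Y : Set S) (x : S), Yᶜ ∉ F → (sib split Y x)ᶜ ∉ F := by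
    intro Y x hY
    unfold TarskiAux.sib
    by_cases h : x ∈ split Y
    · rw [if_pos h, ← Set.diff_eq]; exact (hsplit Y hY).2
    · rw [if_neg h]; exact (hsplit Y hY).1
  -- the "good" sets
  set G : Ordinal.{0} → Set S :=
    fun α => {x | x ∈ node split α x ∧ (node split α x)ᶜ ∉ F} with hGdef
  have hGmem : ∀ {α : Ordinal.{0}} {x : S}, x ∈ G α →
      x ∈ node split α x ∧ (node split α x)ᶜ ∉ F := by
    intro α x hx; exact hx
  have hGmem' : ∀ {α : Ordinal.{0}} {x : S},
      x ∈ node split α x → (node split α x)ᶜ ∉ F → x ∈ G α := by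
    intro α x h1 h2; exact ⟨h1, h2⟩
  have hGmono : ∀ {α β : Ordinal.{0}}, β ≤ α → G α ⊆ G β := by
    intro α β h x hx
    obtain ⟨h1, h2⟩ := hGmem hx
    refine hGmem' (node_anti split h x h1) fun hm => h2 (mem_of_superset hm ?_)
    exact compl_subset_compl.mpr (node_anti split h x)
  -- pieces at each level are equal or disjoint
  have hEOD : ∀ α : Ordinal.{0}, ∀ x y : S, x ∈ G α → y ∈ G α →
      node split α x = node split α y ∨ node split α x ∩ node split α y = ∅ := by
    intro α
    induction α using Ordinal.induction with
    | h α IH =>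
      intro x y hx hy
      by_cases hall : ∀ β : Ordinal.{0}, β < α → node split β x = node split β y
      · by_cases hss : ∀ β : Ordinal.{0}, β < α →
            (x ∈ split (node split β x) ↔ y ∈ split (node split β x))
        · left
          rw [node_def split α x, node_def split α y]
          refine iInter_congr fun β => ?_
          have h1 : node split β.1 x = node split β.1 y := hall β.1 β.2
          have h2 := hss β.1 β.2
          rw [← h1]
          unfold TarskiAux.step
          exact congrArg (fun t => node split β.1 x ∩ t) (if_congr h2 rfl rfl)
        · right
          push_neg at hss
          obtain ⟨β, hβ, hne⟩ := hss
          have hYeq := hall β hβ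
          have hd : step split (node split β x) x ∩ step split (node split β y) y = ∅ := by
            rw [← hYeq]
            unfold TarskiAux.step
            rcases hne with ⟨hx', hy'⟩ | ⟨hx', hy'⟩
            · rw [if_pos hx', if_neg hy']
              ext z
              simp only [Set.mem_inter_iff, Set.mem_compl_iff, Set.mem_empty_iff_false, iff_false]
              tauto
            · rw [if_neg hx', if_pos hy']
              ext z
              simp only [Set.mem_inter_iff, Set.mem_compl_iff, Set.mem_empty_iff_false, iff_false]
              tauto
          have hsub := Set.inter_subset_inter (node_subset_step split hβ x)
            (node_subset_step split hβ y)
          exact subset_empty_iff.mp (hsub.trans hd.subset)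
      · push_neg at hall
        obtain ⟨β, hβ, hne⟩ := hall
        rcases IH β hβ x y (hGmono hβ.le hx) (hGmono hβ.le hy) with h | h
        · exact absurd h hne
        · right
          have hsub := Set.inter_subset_inter (node_anti split hβ.le x) (node_anti split hβ.le y)
          exact subset_empty_iff.mp (hsub.trans h.subset)
  -- each level is countable
  have hLev : ∀ α : Ordinal.{0},
      {A : Set S | ∃ x, x ∈ G α ∧ node split α x = A}.Countable := by
    intro α
    by_contra hA
    have hposall : ∀ X ∈ {A : Set S | ∃ x, x ∈ G α ∧ node split α x = A}, Xᶜ ∉ F := by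
      rintro X ⟨x, hx, rfl⟩
      exact (hGmem hx).2
    obtain ⟨X, hX, Y, hY, hXY, hpos⟩ := hsat _ hA hposall
    obtain ⟨x, hx, rfl⟩ := hX
    obtain ⟨y, hy, rfl⟩ := hY
    rcases hEOD α x y hx hy with h | h
    · exact hXY h
    · rw [h, compl_empty] at hpos; exact hpos univ_mem
  have haleph0le : (ℵ₀ : Cardinal) ≤ 2 ^ ℵ₀ := by
    rw [two_power_aleph0]; exact aleph0_le_continuum
  -- main lemma : G α ∈ F for α < ω₁
  have hGF : ∀ α : Ordinal.{0}, α < (ℵ₁ : Cardinal).ord → G α ∈ F := by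
    intro α
    induction α using Ordinal.induction with
    | h α IH =>
      intro hα
      rcases Ordinal.zero_or_succ_or_isSuccLimit α with rfl | ⟨β, rfl⟩ | hlim
      · have h0 : G 0 = Set.univ := by
          apply Set.eq_univ_of_forall
          intro x
          refine hGmem' ?_ ?_
          · rw [node_zero]; exact Set.mem_univ x
          · rw [node_zero, Set.compl_univ]; exact F.empty_notMem
        rw [h0]; exact univ_mem
      · have hβα : β < Order.succ β := lt_succ β
        have hnode : ∀ x : S, node split (Order.succ β) x = step split (node split β x) x := by
          intro x
          rw [← Ordinal.add_one_eq_succ]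
          exact node_succ split β x
        have hGs : G β ⊆ G (Order.succ β) := by
          intro x hx
          obtain ⟨h1, h2⟩ := hGmem hx
          refine hGmem' ?_ ?_
          · rw [hnode]; exact mem_step h1
          · rw [hnode]; exact hstep_pos _ x h2
        exact mem_of_superset (IH β hβα (hβα.trans hα)) hGs
      · -- limit case
        set ι := α.ToType with hι
        set e := (Ordinal.ToType.mk (o := α)) with he
        set oi : ι → Ordinal.{0} := fun i => (e.symm i).1 with hoi
        have hoilt : ∀ i, oi i < α := fun i => (e.symm i).2
        have hoiapp : ∀ (β : Ordinal.{0}) (hb : β < α), oi (e ⟨β, hb⟩) = β := by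
          intro β hb
          rw [hoi]
          simp
        have hcard : (Cardinal.mk ι) ≤ ℵ₀ := by
          rw [hι, Cardinal.mk_toType]
          have h1 : α.card < ℵ₁ := Cardinal.lt_ord.mp hα
          rwa [← succ_aleph0, lt_succ_iff] at h1
        have hT : (⋂ i : ι, G (oi i)) ∈ F :=
          hcomp ι _ (hcard.trans haleph0le) fun i => IH (oi i) (hoilt i) ((hoilt i).trans hα)
        have hTsub : ∀ i : ι, (⋂ j : ι, G (oi j)) ⊆ G (oi i) := fun i => iInter_subset _ i
        have hTsub' : ∀ (β : Ordinal.{0}) (hb : β < α), (⋂ j : ι, G (oi j)) ⊆ G β := by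
          intro β hb
          have h1 := hTsub (e ⟨β, hb⟩)
          rwa [hoiapp β hb] at h1
        have hmemT : ∀ x ∈ (⋂ j : ι, G (oi j)), x ∈ node split α x := by
          intro x hx
          rw [node_def]
          exact Set.mem_iInter.2 fun β => mem_step (hGmem (hTsub' β.1 β.2 hx)).1
        have hnodeT : ∀ x : S, node split α x = ⋂ i : ι, node split (oi i) x := by
          intro x
          rw [node_limit split hlim x]
          apply subset_antisymm
          · exact subset_iInter fun i =>
              iInter_subset (fun β : {β : Ordinal // β < α} => node split β.1 x) ⟨oi i, hoilt i⟩
          · refine subset_iInter fun β => ?_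
            refine (iInter_subset (fun i => node split (oi i) x) (e ⟨β.1, β.2⟩)).trans ?_
            rw [hoiapp β.1 β.2]
        set V : Set (ι → Set S) :=
          {g | ∃ x : S, x ∈ (⋂ j : ι, G (oi j)) ∧ (node split α x)ᶜ ∈ F ∧
            g = fun i => node split (oi i) x} with hV
        have hVcard : Cardinal.mk ↥V ≤ 2 ^ ℵ₀ := by
          have hsub : V ⊆ {g : ι → Set S |
              ∀ i, g i ∈ {A : Set S | ∃ x, x ∈ G (oi i) ∧ node split (oi i) x = A}} := by
            rintro g ⟨x, hxT, _, rfl⟩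
            exact fun i => ⟨x, hTsub i hxT, rfl⟩
          calc Cardinal.mk ↥V
              ≤ Cardinal.mk ↥{g : ι → Set S |
                  ∀ i, g i ∈ {A : Set S | ∃ x, x ∈ G (oi i) ∧ node split (oi i) x = A}} :=
                Cardinal.mk_le_mk_of_subset hsub
            _ = Cardinal.mk (∀ i : ι, ↥{A : Set S | ∃ x, x ∈ G (oi i) ∧ node split (oi i) x = A}) :=
                Cardinal.mk_congr (Equiv.subtypePiEquivPi)
            _ = Cardinal.prod (fun i =>
                  Cardinal.mk ↥{A : Set S | ∃ x, x ∈ G (oi i) ∧ node split (oi i) x = A}) :=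
                Cardinal.mk_pi _
            _ ≤ Cardinal.prod (fun _ : ι => ℵ₀) :=
                Cardinal.prod_le_prod _ _ fun i =>
                  Cardinal.mk_le_aleph0_iff.mpr (hLev (oi i)).to_subtype
            _ = ℵ₀ ^ Cardinal.mk ι := Cardinal.prod_const' ι ℵ₀
            _ ≤ ℵ₀ ^ (ℵ₀ : Cardinal) := by
                exact Cardinal.power_le_power_left Cardinal.aleph0_ne_zero hcard
            _ = 2 ^ ℵ₀ := by rw [aleph0_power_aleph0, two_power_aleph0]
        have hC : ∀ g : ↥V, ((⋂ i, (g : ι → Set S) i)ᶜ) ∈ F := by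
          rintro ⟨g, x, hxT, hnull, rfl⟩
          show ((⋂ i, node split (oi i) x)ᶜ) ∈ F
          rw [← hnodeT x]
          exact hnull
        have hN : (⋂ g : ↥V, (⋂ i, (g : ι → Set S) i)ᶜ) ∈ F := hcomp ↥V _ hVcard hC
        refine mem_of_superset (inter_mem hT hN) ?_
        rintro x ⟨hxT, hxN⟩
        refine hGmem' (hmemT x hxT) fun hnull => ?_
        have hgV : (fun i => node split (oi i) x) ∈ V := ⟨x, hxT, hnull, rfl⟩
        have hx2 := Set.mem_iInter.1 hxN ⟨_, hgV⟩
        refine hx2 ?_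
        show x ∈ ⋂ i, node split (oi i) x
        rw [← hnodeT x]
        exact hmemT x hxT
  -- now pick a point in the intersection of all G α, α < ω₁
  set ι1 := ((ℵ₁ : Cardinal).ord).ToType with hι1
  set e1 := (Ordinal.ToType.mk (o := (ℵ₁ : Cardinal).ord)) with he1
  set o1 : ι1 → Ordinal.{0} := fun i => (e1.symm i).1 with ho1def
  have ho1 : ∀ i, o1 i < (ℵ₁ : Cardinal).ord := fun i => (e1.symm i).2
  have hbigcard : Cardinal.mk ι1 ≤ 2 ^ ℵ₀ := by
    rw [hι1, Cardinal.mk_toType, Cardinal.card_ord, two_power_aleph0]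
    exact aleph_one_le_continuum
  have hbig : (⋂ i : ι1, G (o1 i)) ∈ F := hcomp ι1 _ hbigcard fun i => hGF (o1 i) (ho1 i)
  obtain ⟨x0, hx0⟩ := Filter.nonempty_of_mem hbig
  have hx0' : ∀ i : ι1, x0 ∈ G (o1 i) := fun i => Set.mem_iInter.1 hx0 i
  set W : ι1 → Set S := fun i => sib split (node split (o1 i) x0) x0 with hW
  have hWpos : ∀ i, (W i)ᶜ ∉ F := fun i => hsib_pos _ _ (hGmem (hx0' i)).2
  have hWne : ∀ i, (W i).Nonempty := by
    intro i
    rcases (W i).eq_empty_or_nonempty with h | h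
    · exact absurd (by rw [h, compl_empty]; exact univ_mem) (hWpos i)
    · exact h
  have hWd : ∀ i j : ι1, o1 i < o1 j → W i ∩ W j = ∅ := by
    intro i j hij
    have h1 : W j ⊆ node split (o1 i + 1) x0 := by
      refine (sib_subset split _ x0).trans (node_anti split ?_ x0)
      rw [Ordinal.add_one_eq_succ]
      exact succ_le_of_lt hij
    have h2 : W i ∩ node split (o1 i + 1) x0 = ∅ := by
      rw [node_succ, Set.inter_comm]
      exact step_inter_sib split (node split (o1 i) x0) x0
    exact subset_empty_iff.mp ((Set.inter_subset_inter_right _ h1).trans h2.subset)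
  have hWdisj : ∀ i j : ι1, i ≠ j → W i ∩ W j = ∅ := by
    intro i j hij
    rcases lt_trichotomy (o1 i) (o1 j) with h | h | h
    · exact hWd i j h
    · exact absurd (e1.symm.injective (Subtype.ext h)) hij
    · rw [Set.inter_comm]; exact hWd j i h
  have hWinj : Function.Injective W := by
    intro i j hij
    by_contra hne
    obtain ⟨z, hz⟩ := hWne i
    have hz2 : z ∈ W i ∩ W j := ⟨hz, hij ▸ hz⟩
    rw [hWdisj i j hne] at hz2
    exact hz2
  have hunc : ¬ (Set.range W).Countable := by
    intro hc
    have h1 : Cardinal.mk ↥(Set.range W) ≤ ℵ₀ := Cardinal.mk_le_aleph0_iff.mpr hc.to_subtype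
    rw [Cardinal.mk_range_eq W hWinj, hι1, Cardinal.mk_toType, Cardinal.card_ord] at h1
    exact absurd h1 Cardinal.aleph0_lt_aleph_one.not_ge
  have hposW : ∀ X ∈ Set.range W, Xᶜ ∉ F := by
    rintro X ⟨i, rfl⟩
    exact hWpos i
  obtain ⟨X, hX, Y, hY, hXY, hpos⟩ := hsat (Set.range W) hunc hposW
  obtain ⟨i, rfl⟩ := hX
  obtain ⟨j, rfl⟩ := hY
  have hij : i ≠ j := fun h => hXY (h ▸ rfl)
  rw [hWdisj i j hij, compl_empty] at hpos
  exact hpos univ_mem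
end

section
/- Let κ ≤ λ be uncountable cardinals and let E be a collection of fewer than κ countable partitions of P_κ(λ), with κ regular (or more generally: assuming one can find, for any <κ-many partitions and any finitely many elements of λ, a point of P_κ(λ) in prescribed cells containing those elements). Then there is a fine ultrafilter U on P_κ(λ) such that for each partition A ∈ E, some member of A belongs to U. Consequently, the sets S^A = {U fine ultrafilter : no member of A is in U}, for A ∈ E, do not cover the space of fine ultrafilters. -/
/-- Usuba's covering fact: if `κ ≤ λ` are uncountable cardinals with `κ` regular, and `E`
is a family of fewer than `κ` countable partitions of `P_κ(λ)`, then there is a fine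
ultrafilter on `P_κ(λ)` containing a cell of each partition in `E`; hence the sets `S^𝒜`
for `𝒜 ∈ E` do not cover the space of fine ultrafilters. -/
theorem stmt19 (κ l : Cardinal) (hκ : Cardinal.aleph0 < κ) (hreg : κ.IsRegular)
    (hκl : κ ≤ l) (A : Type) (hA : Cardinal.mk A = l)
    (E : Set (Set (Set {x : Set A // Cardinal.mk ↥x < κ})))
    (hE : Cardinal.mk ↥E < κ)
    (hpart : ∀ 𝒜 ∈ E, 𝒜.Countable ∧ 𝒜.PairwiseDisjoint id ∧ ⋃₀ 𝒜 = Set.univ) :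
    ∃ U : Ultrafilter {x : Set A // Cardinal.mk ↥x < κ},
      (∀ a : A, {x : {x : Set A // Cardinal.mk ↥x < κ} | a ∈ x.1} ∈ U) ∧
      ∀ 𝒜 ∈ E, ∃ B ∈ 𝒜, B ∈ U := by
  classical
  revert hpart
  revert hE
  revert E
  set X := {x : Set A // Cardinal.mk ↥x < κ} with hXdef
  intro E hE hpart
  have hℵ0 : Cardinal.aleph0 ≤ κ := hκ.le
  -- unions of fewer than κ small sets are small
  have hUnion : ∀ (ι : Type) (f : ι → Set A), Cardinal.mk ι < κ →
      (∀ i, Cardinal.mk ↥(f i) < κ) → Cardinal.mk ↥(⋃ i, f i) < κ := by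
    intro ι f hι hf
    refine lt_of_le_of_lt (Cardinal.mk_iUnion_le f) ?_
    exact Cardinal.mul_lt_of_lt hℵ0 hι (Cardinal.iSup_lt_of_isRegular hreg hι hf)
  have hempty : Cardinal.mk ↥(∅ : Set A) < κ := by
    rw [Cardinal.mk_emptyCollection]
    exact lt_of_lt_of_le Cardinal.aleph0_pos hℵ0
  -- choose a cell of each partition containing each point
  have hcov : ∀ (i : ↥E) (y : X), ∃ B, B ∈ (i.1 : Set (Set X)) ∧ y ∈ B := by
    intro i y
    have h := (hpart i.1 i.2).2.2
    have hy : y ∈ ⋃₀ (i.1 : Set (Set X)) := by rw [h]; trivial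
    obtain ⟨B, hB, hyB⟩ := hy
    exact ⟨B, hB, hyB⟩
  choose cell cell_mem mem_cell using hcov
  -- countability of cells
  haveI hcnt : ∀ i : ↥E, Countable ↥(i.1 : Set (Set X)) :=
    fun i => ((hpart i.1 i.2).1).to_subtype
  -- key reflection lemma: for each finite family of partitions there is a bound
  -- after which every pattern is unbounded
  have key : ∀ s : Finset ↥E, ∃ z : X, ∀ y : X, z.1 ⊆ y.1 → ∀ w : X,
      ∃ v : X, w.1 ⊆ v.1 ∧ ∀ i : ↥E, i ∈ s → cell i v = cell i y := by
    intro s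
    let T := (i : ↥(s : Set ↥E)) → {B : Set X // B ∈ ((i : ↥E).1 : Set (Set X))}
    haveI : Countable T := by
      haveI : ∀ i : ↥(s : Set ↥E), Countable {B : Set X // B ∈ ((i : ↥E).1 : Set (Set X))} :=
        fun i => hcnt (i : ↥E)
      infer_instance
    let pat : X → T := fun y i => ⟨cell (i : ↥E) y, cell_mem (i : ↥E) y⟩
    let Bdd : T → Prop := fun p => ∃ z : X, ∀ w : X, z.1 ⊆ w.1 → pat w ≠ p
    let b : T → X := fun p => if h : Bdd p then h.choose else ⟨∅, hempty⟩
    have hb : ∀ p, Bdd p → ∀ w : X, (b p).1 ⊆ w.1 → pat w ≠ p := by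
      intro p hp
      have : b p = hp.choose := dif_pos hp
      rw [this]
      exact hp.choose_spec
    have hZ : Cardinal.mk ↥(⋃ p : T, (b p).1) < κ :=
      hUnion T _ (lt_of_le_of_lt Cardinal.mk_le_aleph0 hκ) (fun p => (b p).2)
    refine ⟨⟨_, hZ⟩, ?_⟩
    intro y hy w
    have hnb : ¬ Bdd (pat y) := by
      intro h
      exact hb _ h y (subset_trans (Set.subset_iUnion (fun p => (b p).1) (pat y)) hy) rfl
    obtain ⟨v, hv, hveq⟩ : ∃ v : X, w.1 ⊆ v.1 ∧ pat v = pat y := by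
      by_contra hcon
      push_neg at hcon
      exact hnb ⟨w, fun v hv => hcon v hv⟩
    refine ⟨v, hv, ?_⟩
    intro i hi
    have h1 := congrFun hveq ⟨i, by simpa using hi⟩
    exact congrArg Subtype.val h1
  choose zs hzs using key
  -- the master point x0
  have hX0 : Cardinal.mk ↥(⋃ s : Finset ↥E, (zs s).1) < κ := by
    refine hUnion _ _ ?_ (fun s => (zs s).2)
    rcases finite_or_infinite ↥E with h | h
    · haveI := Fintype.ofFinite ↥E
      exact lt_of_lt_of_le (Cardinal.lt_aleph0_of_finite (Finset ↥E)) hℵ0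
    · rw [Cardinal.mk_finset_of_infinite]; exact hE
  let x0 : X := ⟨_, hX0⟩
  have hx0 : ∀ s : Finset ↥E, (zs s).1 ⊆ x0.1 :=
    fun s => Set.subset_iUnion (fun s => (zs s).1) s
  -- generators of the filter
  let S : Set (Set X) :=
    (Set.range fun a : A => {x : X | a ∈ x.1}) ∪ (Set.range fun i : ↥E => cell i x0)
  -- finite intersection property
  have hfip : ∀ t : Set (Set X), t ⊆ S → t.Finite → (⋂₀ t).Nonempty := by
    intro t hts htf
    haveI : Finite ↥t := htf
    -- collect the points of A used
    let F : Set A := ⋃ u : ↥t,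
      (if h : ∃ a : A, u.1 = {x : X | a ∈ x.1} then {h.choose} else ∅)
    have hFfin : F.Finite := Set.finite_iUnion (fun u => by split <;> simp)
    have hFκ : Cardinal.mk ↥F < κ := lt_of_lt_of_le hFfin.lt_aleph0 hℵ0
    -- collect the partitions used
    let I : Set ↥E := ⋃ u : ↥t,
      (if h : ∃ i : ↥E, u.1 = cell i x0 then {h.choose} else ∅)
    have hIfin : I.Finite := Set.finite_iUnion (fun u => by split <;> simp)
    let s : Finset ↥E := hIfin.toFinset
    -- a point containing x0 and F
    have hz0 : Cardinal.mk ↥(x0.1 ∪ F) < κ :=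
      lt_of_le_of_lt (Cardinal.mk_union_le _ _) (Cardinal.add_lt_of_lt hℵ0 x0.2 hFκ)
    obtain ⟨v, hv, hvcell⟩ := hzs s x0 (hx0 s) ⟨x0.1 ∪ F, hz0⟩
    refine ⟨v, ?_⟩
    intro u hu
    by_cases hd : ∃ a : A, u = {x : X | a ∈ x.1}
    · have haF : hd.choose ∈ F := by
        refine Set.mem_iUnion.2 ⟨⟨u, hu⟩, ?_⟩
        rw [dif_pos hd]
        exact rfl
      have : hd.choose ∈ v.1 := hv (Or.inr haF)
      rw [hd.choose_spec]
      exact this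
    · have hd' : ∃ i : ↥E, u = cell i x0 := by
        rcases hts hu with ⟨a, ha⟩ | ⟨i, hi⟩
        · exact absurd ⟨a, ha.symm⟩ hd
        · exact ⟨i, hi.symm⟩
      have hiI : hd'.choose ∈ I := by
        refine Set.mem_iUnion.2 ⟨⟨u, hu⟩, ?_⟩
        rw [dif_pos hd']
        exact rfl
      have his : hd'.choose ∈ s := hIfin.mem_toFinset.2 hiI
      have hcv : cell hd'.choose v = cell hd'.choose x0 := hvcell _ his
      have : v ∈ cell hd'.choose x0 := hcv ▸ mem_cell hd'.choose v
      rw [hd'.choose_spec]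
      exact this
  haveI hNB : Filter.NeBot (Filter.generate S) := Filter.generate_neBot_iff.2 hfip
  refine ⟨Ultrafilter.of (Filter.generate S), ?_, ?_⟩
  · intro a
    exact Ultrafilter.of_le _ (Filter.mem_generate_of_mem (Or.inl ⟨a, rfl⟩))
  · intro 𝒜 h𝒜
    refine ⟨cell ⟨𝒜, h𝒜⟩ x0, cell_mem ⟨𝒜, h𝒜⟩ x0, ?_⟩
    exact Ultrafilter.of_le _ (Filter.mem_generate_of_mem (Or.inr ⟨⟨𝒜, h𝒜⟩, rfl⟩))
end
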